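/- Let n ≥ 3 and p ∈ ℝ, and suppose f : ℝ₊ × (ℝⁿ \ {0}) → ℝ satisfies: (i) the functional equation f(s,x) = λ^{p/n} f(sλ^{1/n}, φ_λᵀx) + (1−λ)^{p/n} f(s(1−λ)^{1/n}, ψ_λᵀx) for all λ ∈ (0,1), where φ_λ, ψ_λ are as in the paper; (ii) f(s, cx) = c^{-p} f(s,x) for all c > 0; (iii) for every s > 0 the restriction of f(s,·) to S^{n-1} has countable support; (iv) for every x ≠ 0 the function f(·,x) is bounded below on some open interval; (v) f(s, πx) = f(s,x) for every permutation matrix π and all (s,x). If f(s, ±e₁) = 0 for all s > 0, then f(s,x) = 0 for all s > 0 and all x ∉ span{e₁+⋯+e_n}. -/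

import Mathlib

open Set

/-- Transpose of the map `φ_λ` from the paper. -/
noncomputable def phiT {m : ℕ} (l : ℝ) (x : EuclideanSpace ℝ (Fin (m + 3))) :
    EuclideanSpace ℝ (Fin (m + 3)) :=
  WithLp.toLp 2 (Function.update x 1 ((1 - l) * x 0 + l * x 1))

/-- Transpose of the map `ψ_λ` from the paper. -/
noncomputable def psiT {m : ℕ} (l : ℝ) (x : EuclideanSpace ℝ (Fin (m + 3))) :
    EuclideanSpace ℝ (Fin (m + 3)) :=
  WithLp.toLp 2 (Function.update x 0 ((1 - l) * x 0 + l * x 1))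

namespace Stmt19Aux
open Function
open scoped Classical

variable {m : ℕ}

/-- number of nonzero coordinates -/
noncomputable def nsupp (v : Fin (m+3) → ℝ) : ℕ :=
  (Finset.univ.filter fun i => v i ≠ 0).card

lemma mem_supp_iff {v : Fin (m+3) → ℝ} {i : Fin (m+3)} :
    i ∈ (Finset.univ.filter fun i => v i ≠ 0) ↔ v i ≠ 0 := by simp

lemma supp_update_zero (v : Fin (m+3) → ℝ) (a : Fin (m+3)) :
    (Finset.univ.filter fun i => (update v a 0) i ≠ 0)
      = (Finset.univ.filter fun i => v i ≠ 0).erase a := by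
  ext i
  by_cases h : i = a <;> simp [h, Function.update_of_ne, Ne.symm]

lemma nsupp_update_zero {v : Fin (m+3) → ℝ} {a : Fin (m+3)} (ha : v a ≠ 0) :
    nsupp (update v a 0) = nsupp v - 1 := by
  rw [nsupp, supp_update_zero, Finset.card_erase_of_mem (mem_supp_iff.2 ha)]; rfl

lemma supp_update_subset (v : Fin (m+3) → ℝ) (a : Fin (m+3)) (t : ℝ) :
    (Finset.univ.filter fun i => (update v a t) i ≠ 0)
      ⊆ insert a (Finset.univ.filter fun i => v i ≠ 0) := by
  intro i hi
  rcases eq_or_ne i a with rfl | h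
  · exact Finset.mem_insert_self _ _
  · simp only [mem_supp_iff, Function.update_of_ne h] at hi
    exact Finset.mem_insert_of_mem (mem_supp_iff.2 hi)

lemma nsupp_update_le (v : Fin (m+3) → ℝ) (a : Fin (m+3)) (t : ℝ) :
    nsupp (update v a t) ≤ nsupp v + 1 := by
  refine le_trans (Finset.card_le_card (supp_update_subset v a t)) ?_
  exact le_trans (Finset.card_insert_le _ _) (by rfl)

lemma ne_of_coord {v : EuclideanSpace ℝ (Fin (m+3))} : v ≠ 0 ↔ ∃ i, v i ≠ 0 := by
  constructor
  · intro h; by_contra hc; push_neg at hc; exact h (by ext i; simp [hc i])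
  · rintro ⟨i, hi⟩ h; simp [h] at hi

lemma toLp_ne_zero {g : Fin (m+3) → ℝ} (h : g ≠ 0) :
    (WithLp.toLp 2 g : EuclideanSpace ℝ (Fin (m+3))) ≠ 0 := by
  rw [ne_of_coord]; obtain ⟨i, hi⟩ := Function.ne_iff.1 h; exact ⟨i, hi⟩

lemma one_le_nsupp {v : EuclideanSpace ℝ (Fin (m+3))} (hv : v ≠ 0) : 1 ≤ nsupp v := by
  obtain ⟨i, hi⟩ := ne_of_coord.1 hv
  exact Finset.card_pos.2 ⟨i, mem_supp_iff.2 hi⟩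

lemma nsupp_le_card (v : Fin (m+3) → ℝ) : nsupp v ≤ m + 3 := by
  simpa [nsupp] using Finset.card_le_card (Finset.filter_subset _ (Finset.univ : Finset (Fin (m+3))))

lemma exists_zero_coord {v : Fin (m+3) → ℝ} (h : nsupp v < m + 3) : ∃ b, v b = 0 := by
  by_contra hc
  push_neg at hc
  have : (Finset.univ.filter fun i => v i ≠ 0) = Finset.univ := by
    ext i; simp [hc i]
  rw [nsupp, this] at h
  simp at h

lemma nsupp_eq_card_of_all_ne {v : Fin (m+3) → ℝ} (h : ∀ i, v i ≠ 0) : nsupp v = m + 3 := by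
  have : (Finset.univ.filter fun i => v i ≠ 0) = Finset.univ := by
    ext i; simp [h i]
  rw [nsupp, this]
  simp

lemma exists_perm01 (a b : Fin (m+3)) (hab : a ≠ b) :
    ∃ σ : Equiv.Perm (Fin (m+3)), σ 0 = a ∧ σ 1 = b := by
  set σ₁ := Equiv.swap (0 : Fin (m+3)) a with hσ₁
  have h0 : σ₁ 0 = a := Equiv.swap_apply_left _ _
  set b' := σ₁.symm b with hb'
  have hb'0 : b' ≠ 0 := by
    intro h
    apply hab
    have : σ₁ b' = b := Equiv.apply_symm_apply _ _
    rw [h, h0] at this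
    exact this.symm ▸ rfl
  refine ⟨σ₁ * Equiv.swap 1 b', ?_, ?_⟩
  · have : Equiv.swap (1 : Fin (m+3)) b' 0 = 0 :=
      Equiv.swap_apply_of_ne_of_ne (by simp) (Ne.symm hb'0)
    simp [Equiv.Perm.mul_apply, this, h0]
  · have : Equiv.swap (1 : Fin (m+3)) b' 1 = b' := Equiv.swap_apply_left _ _
    simp [Equiv.Perm.mul_apply, this, hb', Equiv.apply_symm_apply]

lemma lam_mem {x y : ℝ} (h : x * y < 0) : x / (x - y) ∈ Set.Ioo (0:ℝ) 1 := by
  rcases mul_neg_iff.1 h with ⟨hx, hy⟩ | ⟨hx, hy⟩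
  · constructor
    · exact div_pos hx (by linarith)
    · rw [div_lt_one (by linarith)]; linarith
  · constructor
    · exact div_pos_of_neg_of_neg hx (by linarith)
    · rw [div_lt_one_of_neg (by linarith)]; linarith

lemma sign_transfer {x y z : ℝ} (h1 : x * y < 0) (h2 : 0 < x * z) : z * y < 0 := by
  have h3 : (x * z) * (x * y) < 0 := mul_neg_of_pos_of_neg h2 h1
  by_contra h
  push_neg at h
  nlinarith [mul_nonneg (mul_self_nonneg x) h]

lemma not_countable_ray {x : ℝ} (hx : x ≠ 0) : ¬ {ζ : ℝ | x * ζ < 0}.Countable := by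
  rcases hx.lt_or_gt with hx' | hx'
  · have : {ζ : ℝ | x * ζ < 0} = Set.Ioi 0 := by
      ext ζ; simp only [Set.mem_setOf_eq, Set.mem_Ioi]
      constructor
      · intro h; nlinarith
      · intro h; exact mul_neg_of_neg_of_pos hx' h
    rw [this]
    intro h
    have h2 := Cardinal.mk_Ioi_real 0
    have := h.le_aleph0
    rw [h2] at this
    exact absurd this (by simp [Cardinal.aleph0_lt_continuum.not_ge])
  · have : {ζ : ℝ | x * ζ < 0} = Set.Iio 0 := by
      ext ζ; simp only [Set.mem_setOf_eq, Set.mem_Iio]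
      constructor
      · intro h; nlinarith
      · intro h; exact mul_neg_of_pos_of_neg hx' h
    rw [this]
    intro h
    have h2 := Cardinal.mk_Iio_real 0
    have := h.le_aleph0
    rw [h2] at this
    exact absurd this (by simp [Cardinal.aleph0_lt_continuum.not_ge])

lemma not_countable_Ioo01 : ¬ (Set.Ioo (0:ℝ) 1).Countable := by
  intro h
  have h2 := Cardinal.mk_Ioo_real (show (0:ℝ) < 1 by norm_num)
  have := h.le_aleph0
  rw [h2] at this
  exact absurd this (by simp [Cardinal.aleph0_lt_continuum.not_ge])

lemma rpow_right_inj {x y c : ℝ} (hx : 0 < x) (hy : 0 < y) (hc : 0 < c)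
    (h : x ^ c = y ^ c) : x = y := by
  rcases lt_trichotomy x y with hlt | heq | hlt
  · exact absurd h (ne_of_lt (Real.rpow_lt_rpow hx.le hlt hc))
  · exact heq
  · exact absurd h.symm (ne_of_lt (Real.rpow_lt_rpow hy.le hlt hc))

lemma rpowN_inv {r : ℝ} (hr : 0 < r) :
    (r ^ ((m : ℝ) + 3)) ^ (((m : ℝ) + 3))⁻¹ = r := by
  have hN : ((m : ℝ) + 3) ≠ 0 := by positivity
  rw [← Real.rpow_mul hr.le, mul_inv_cancel₀ hN, Real.rpow_one]

noncomputable def nmz {m' : ℕ} (w : EuclideanSpace ℝ (Fin (m'+3))) :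
    EuclideanSpace ℝ (Fin (m'+3)) := ‖w‖⁻¹ • w

lemma nmz_apply {m' : ℕ} (w : EuclideanSpace ℝ (Fin (m'+3))) (i : Fin (m'+3)) :
    nmz w i = ‖w‖⁻¹ * w i := rfl

lemma pick2 {α : Type*} {A B C : Set α} (hA : ¬ A.Countable) (hB : B.Countable)
    (hC : C.Countable) : ∃ x, x ∈ A ∧ x ∉ B ∧ x ∉ C := by
  by_contra h
  push_neg at h
  apply hA
  refine Set.Countable.mono ?_ (hB.union hC)
  intro x hx
  by_cases hxB : x ∈ B
  · exact Set.mem_union_left _ hxB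
  · exact Set.mem_union_right _ (h x hx hxB)

lemma zeta_inj {x l1 l2 : ℝ} (hx : x ≠ 0) (h1 : l1 ≠ 0) (h2 : l2 ≠ 0)
    (h : x * (l1 - 1) / l1 = x * (l2 - 1) / l2) : l1 = l2 := by
  rw [div_eq_div_iff h1 h2] at h
  have h10 : x * (l2 - l1) = 0 := by linear_combination -h
  rcases mul_eq_zero.1 h10 with h' | h'
  · exact absurd h' hx
  · linarith

lemma lam_formula {x l : ℝ} (hx : x ≠ 0) (hl : l ≠ 0) :
    x / (x - x * (l - 1) / l) = l := by
  have hsub : x - x * (l - 1) / l = x / l := by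
    field_simp
    ring
  rw [hsub, div_div_eq_mul_div, mul_comm x l, mul_div_assoc, div_self hx, mul_one]

lemma sub_ne_of_mul_neg {x ζ : ℝ} (h : x * ζ < 0) : x - ζ ≠ 0 := by
  intro hd
  have : x = ζ := by linarith
  rw [← this] at h
  nlinarith

lemma ratio_inj {x y ζ₁ ζ₂ : ℝ} (hx : x ≠ 0) (hy : y ≠ 0) (hxy : x ≠ y)
    (h1 : x * ζ₁ < 0) (h2 : x * ζ₂ < 0) (h1' : y * ζ₁ < 0) (h2' : y * ζ₂ < 0)
    (h : (y / (y - ζ₁)) / (x / (x - ζ₁)) = (y / (y - ζ₂)) / (x / (x - ζ₂))) : ζ₁ = ζ₂ := by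
  have d1 : x - ζ₁ ≠ 0 := sub_ne_of_mul_neg h1
  have d2 : x - ζ₂ ≠ 0 := sub_ne_of_mul_neg h2
  have d3 : y - ζ₁ ≠ 0 := sub_ne_of_mul_neg h1'
  have d4 : y - ζ₂ ≠ 0 := sub_ne_of_mul_neg h2'
  have hkey1 : (y / (y - ζ₁)) / (x / (x - ζ₁)) = (y * (x - ζ₁)) / (x * (y - ζ₁)) := by
    rw [div_div_div_eq, mul_comm (y - ζ₁) x]
  have hkey2 : (y / (y - ζ₂)) / (x / (x - ζ₂)) = (y * (x - ζ₂)) / (x * (y - ζ₂)) := by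
    rw [div_div_div_eq, mul_comm (y - ζ₂) x]
  rw [hkey1, hkey2, div_eq_div_iff (mul_ne_zero hx d3) (mul_ne_zero hx d4)] at h
  have h8 : y * x * ((x - y) * (ζ₁ - ζ₂)) = 0 := by linear_combination h
  rcases mul_eq_zero.1 h8 with h9 | h9
  · exact absurd h9 (mul_ne_zero hy hx)
  rcases mul_eq_zero.1 h9 with h10 | h10
  · exact absurd (sub_eq_zero.1 h10) hxy
  · linarith

lemma pair_eq {p : ℝ} {f : ℝ → EuclideanSpace ℝ (Fin (m + 3)) → ℝ}
    (hfe : ∀ s : ℝ, 0 < s → ∀ x : EuclideanSpace ℝ (Fin (m + 3)), x ≠ 0 →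
      ∀ l ∈ Set.Ioo (0 : ℝ) 1,
      f s x = l ^ (p / (m + 3 : ℝ)) * f (s * l ^ ((m + 3 : ℝ))⁻¹) (phiT l x)
        + (1 - l) ^ (p / (m + 3 : ℝ)) * f (s * (1 - l) ^ ((m + 3 : ℝ))⁻¹) (psiT l x))
    (hperm : ∀ σ : Equiv.Perm (Fin (m + 3)), ∀ s : ℝ, 0 < s →
      ∀ x : EuclideanSpace ℝ (Fin (m + 3)), f s (WithLp.toLp 2 (fun i => x (σ i))) = f s x)
    (v : EuclideanSpace ℝ (Fin (m + 3))) (hv : v ≠ 0) (a b : Fin (m+3)) (hab : a ≠ b)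
    (s : ℝ) (hs : 0 < s) (l : ℝ) (hl : l ∈ Set.Ioo (0:ℝ) 1) :
    f s v = l ^ (p / (m + 3 : ℝ)) *
        f (s * l ^ ((m + 3 : ℝ))⁻¹) (WithLp.toLp 2 (Function.update v b ((1 - l) * v a + l * v b)))
      + (1 - l) ^ (p / (m + 3 : ℝ)) *
        f (s * (1 - l) ^ ((m + 3 : ℝ))⁻¹) (WithLp.toLp 2 (Function.update v a ((1 - l) * v a + l * v b))) := by
  obtain ⟨σ, hσ0, hσ1⟩ := exists_perm01 a b hab
  set x : EuclideanSpace ℝ (Fin (m+3)) := WithLp.toLp 2 (fun i => v (σ i)) with hx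
  have hxv : ∀ s', 0 < s' → f s' x = f s' v := fun s' hs' => hperm σ s' hs' v
  have hxne : x ≠ 0 := by
    intro h
    apply hv
    ext j
    have h2 : x (σ.symm j) = 0 := by rw [h]; rfl
    have h3 : v (σ (σ.symm j)) = 0 := h2
    rw [Equiv.apply_symm_apply] at h3
    exact h3
  set t : ℝ := (1 - l) * v a + l * v b with ht
  have hphi : phiT l x = WithLp.toLp 2 (fun i => (Function.update v b t) (σ i)) := by
    ext i
    simp only [phiT, WithLp.ofLp_toLp]
    rcases eq_or_ne i 1 with rfl | hi
    · rw [Function.update_self]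
      have hσib : σ 1 = b := hσ1
      rw [Function.update_apply, if_pos hσib]
      show (1 - l) * v (σ 0) + l * v (σ 1) = _
      rw [hσ0, hσ1]
    · rw [Function.update_of_ne hi]
      have : σ i ≠ b := by
        intro h; exact hi (σ.injective (h.trans hσ1.symm))
      rw [Function.update_of_ne this]
  have hpsi : psiT l x = WithLp.toLp 2 (fun i => (Function.update v a t) (σ i)) := by
    ext i
    simp only [psiT, WithLp.ofLp_toLp]
    rcases eq_or_ne i 0 with rfl | hi
    · rw [Function.update_self]
      have hσia : σ 0 = a := hσ0
      rw [Function.update_apply, if_pos hσia]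
      show (1 - l) * v (σ 0) + l * v (σ 1) = _
      rw [hσ0, hσ1]
    · rw [Function.update_of_ne hi]
      have : σ i ≠ a := by
        intro h; exact hi (σ.injective (h.trans hσ0.symm))
      rw [Function.update_of_ne this]
  have key := hfe s hs x hxne l hl
  have hl1 : (0:ℝ) < l := hl.1
  have hl2 : l < 1 := hl.2
  have hs1 : 0 < s * l ^ ((m + 3 : ℝ))⁻¹ := by positivity
  have hs2 : 0 < s * (1 - l) ^ ((m + 3 : ℝ))⁻¹ := by
    have : (0:ℝ) < 1 - l := by linarith
    positivity
  rw [hxv s hs] at key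
  rw [hphi, hpsi] at key
  rw [hperm σ _ hs1 (WithLp.toLp 2 (Function.update v b t)),
    hperm σ _ hs2 (WithLp.toLp 2 (Function.update v a t))] at key
  exact key

lemma zero_eq {p : ℝ} {f : ℝ → EuclideanSpace ℝ (Fin (m + 3)) → ℝ}
    (hfe : ∀ s : ℝ, 0 < s → ∀ x : EuclideanSpace ℝ (Fin (m + 3)), x ≠ 0 →
      ∀ l ∈ Set.Ioo (0 : ℝ) 1,
      f s x = l ^ (p / (m + 3 : ℝ)) * f (s * l ^ ((m + 3 : ℝ))⁻¹) (phiT l x)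
        + (1 - l) ^ (p / (m + 3 : ℝ)) * f (s * (1 - l) ^ ((m + 3 : ℝ))⁻¹) (psiT l x))
    (hperm : ∀ σ : Equiv.Perm (Fin (m + 3)), ∀ s : ℝ, 0 < s →
      ∀ x : EuclideanSpace ℝ (Fin (m + 3)), f s (WithLp.toLp 2 (fun i => x (σ i))) = f s x)
    (v : EuclideanSpace ℝ (Fin (m + 3))) (hv : v ≠ 0) (a b : Fin (m+3)) (hab : a ≠ b)
    (hprod : v a * v b < 0) (s : ℝ) (hs : 0 < s) :
    f s v = (v a / (v a - v b)) ^ (p / (m + 3 : ℝ)) *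
        f (s * (v a / (v a - v b)) ^ ((m + 3 : ℝ))⁻¹) (WithLp.toLp 2 (Function.update v b 0))
      + (1 - v a / (v a - v b)) ^ (p / (m + 3 : ℝ)) *
        f (s * (1 - v a / (v a - v b)) ^ ((m + 3 : ℝ))⁻¹) (WithLp.toLp 2 (Function.update v a 0)) := by
  have hl := lam_mem hprod
  have hne : v a - v b ≠ 0 := by
    intro h
    have : v a = v b := by linarith
    rw [this] at hprod
    nlinarith
  have hval : (1 - v a / (v a - v b)) * v a + (v a / (v a - v b)) * v b = 0 := by
    field_simp
    ring
  have := pair_eq hfe hperm v hv a b hab s hs _ hl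
  rwa [hval] at this

end Stmt19Aux

open Stmt19Aux Function in
theorem stmt_19 (m : ℕ) (p : ℝ) (f : ℝ → EuclideanSpace ℝ (Fin (m + 3)) → ℝ)
    -- (i) the functional equation
    (hfe : ∀ s : ℝ, 0 < s → ∀ x : EuclideanSpace ℝ (Fin (m + 3)), x ≠ 0 →
      ∀ l ∈ Set.Ioo (0 : ℝ) 1,
      f s x = l ^ (p / (m + 3 : ℝ)) * f (s * l ^ ((m + 3 : ℝ))⁻¹) (phiT l x)
        + (1 - l) ^ (p / (m + 3 : ℝ)) * f (s * (1 - l) ^ ((m + 3 : ℝ))⁻¹) (psiT l x))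
    -- (ii) positive homogeneity of degree `-p` in the second argument
    (hhom : ∀ s : ℝ, 0 < s → ∀ x : EuclideanSpace ℝ (Fin (m + 3)), x ≠ 0 →
      ∀ c : ℝ, 0 < c → f s (c • x) = c ^ (-p) * f s x)
    -- (iii) countable support on the sphere
    (hcount : ∀ s : ℝ, 0 < s →
      {x ∈ Metric.sphere (0 : EuclideanSpace ℝ (Fin (m + 3))) 1 | f s x ≠ 0}.Countable)
    -- (iv) boundedness from below on some open interval
    (hbd : ∀ x : EuclideanSpace ℝ (Fin (m + 3)), x ≠ 0 →
      ∃ a b : ℝ, a < b ∧ ∃ c : ℝ, ∀ t ∈ Set.Ioo a b, c ≤ f t x)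
    -- (v) invariance under coordinate permutations
    (hperm : ∀ σ : Equiv.Perm (Fin (m + 3)), ∀ s : ℝ, 0 < s →
      ∀ x : EuclideanSpace ℝ (Fin (m + 3)), f s (WithLp.toLp 2 (fun i => x (σ i))) = f s x)
    -- vanishing at `± e₁`
    (hvan : ∀ s : ℝ, 0 < s → f s (EuclideanSpace.single 0 1) = 0 ∧
      f s (-EuclideanSpace.single 0 1) = 0) :
    ∀ s : ℝ, 0 < s → ∀ x : EuclideanSpace ℝ (Fin (m + 3)), x ≠ 0 →
      x ∉ Submodule.span ℝ {(∑ i, EuclideanSpace.single i (1 : ℝ) :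
        EuclideanSpace ℝ (Fin (m + 3)))} → f s x = 0 := by
  have hNpos : (0:ℝ) < (m:ℝ) + 3 := by positivity
  have hNne : ((m:ℝ) + 3) ≠ 0 := ne_of_gt hNpos
  -- base case : vectors supported on a single coordinate
  have hsingle : ∀ v : EuclideanSpace ℝ (Fin (m+3)), ∀ j : Fin (m+3), v j ≠ 0 →
      (∀ i, i ≠ j → v i = 0) → ∀ s : ℝ, 0 < s → f s v = 0 := by
    intro v j hj hrest s hs
    set σ := Equiv.swap (0 : Fin (m+3)) j with hσ
    have hσ0 : σ 0 = j := Equiv.swap_apply_left _ _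
    have hfv : f s (WithLp.toLp 2 (fun i => v (σ i))) = f s v := hperm σ s hs v
    have hsingle_ne : (EuclideanSpace.single (0 : Fin (m+3)) (1:ℝ)) ≠ 0 := by
      intro h
      have h2 : (EuclideanSpace.single (0 : Fin (m+3)) (1:ℝ)) 0 = 0 := by rw [h]; rfl
      rw [EuclideanSpace.single_apply] at h2
      simp at h2
    have hxval : (fun i => v (σ i)) = fun i => v j * (EuclideanSpace.single (0 : Fin (m+3)) (1:ℝ)) i := by
      funext i
      rcases eq_or_ne i 0 with rfl | hi
      · rw [hσ0, EuclideanSpace.single_apply]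
        simp
      · have hσi : σ i ≠ j := by
          intro h
          apply hi
          have := σ.injective (h.trans hσ0.symm)
          exact this
        rw [hrest _ hσi, EuclideanSpace.single_apply, if_neg hi]
        ring
    rcases hj.lt_or_gt with hneg | hpos
    · -- v j < 0 : use -e₁
      have hxval2 : WithLp.toLp 2 (fun i => v (σ i)) = (-(v j)) • (-(EuclideanSpace.single (0 : Fin (m+3)) (1:ℝ))) := by
        rw [hxval]
        ext i
        show v j * _ = ((-(v j)) • (-(EuclideanSpace.single (0 : Fin (m+3)) (1:ℝ)))) i
        rw [PiLp.smul_apply, PiLp.neg_apply]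
        simp only [smul_eq_mul, EuclideanSpace.single_apply]
        split_ifs <;> ring
      have hne2 : (-(EuclideanSpace.single (0 : Fin (m+3)) (1:ℝ))) ≠ 0 := by
        simpa using hsingle_ne
      have := hhom s hs _ hne2 (-(v j)) (by linarith)
      rw [← hxval2] at this
      rw [← hfv, this, (hvan s hs).2]
      ring
    · have hxval2 : WithLp.toLp 2 (fun i => v (σ i)) = (v j) • (EuclideanSpace.single (0 : Fin (m+3)) (1:ℝ)) := by
        rw [hxval]
        ext i
        show v j * _ = ((v j) • (EuclideanSpace.single (0 : Fin (m+3)) (1:ℝ))) i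
        rw [PiLp.smul_apply]
        simp [smul_eq_mul]
      have := hhom s hs _ hsingle_ne (v j) hpos
      rw [← hxval2] at this
      rw [← hfv, this, (hvan s hs).1]
      ring
  -- normalization : nonvanishing transfers to the sphere
  have hnorm : ∀ s : ℝ, 0 < s → ∀ z : EuclideanSpace ℝ (Fin (m+3)), z ≠ 0 → f s z ≠ 0 →
      (‖z‖⁻¹ • z ∈ Metric.sphere (0 : EuclideanSpace ℝ (Fin (m+3))) 1 ∧ f s (‖z‖⁻¹ • z) ≠ 0) := by
    intro s hs z hz hfz
    have hnz : (0:ℝ) < ‖z‖ := norm_pos_iff.2 hz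
    have hmem : ‖z‖⁻¹ • z ∈ Metric.sphere (0 : EuclideanSpace ℝ (Fin (m+3))) 1 := by
      rw [mem_sphere_zero_iff_norm]
      exact norm_smul_inv_norm hz
    have hune : ‖z‖⁻¹ • z ≠ 0 := by
      intro h
      rw [mem_sphere_zero_iff_norm, h] at hmem
      simp at hmem
    have hrec : z = ‖z‖ • (‖z‖⁻¹ • z) := by
      rw [smul_smul, mul_inv_cancel₀ (ne_of_gt hnz), one_smul]
    have := hhom s hs _ hune ‖z‖ hnz
    rw [← hrec] at this
    refine ⟨hmem, fun h => hfz ?_⟩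
    rw [this, h, mul_zero]
  -- Main induction
  suffices Hk : ∀ k : ℕ, ∀ v : EuclideanSpace ℝ (Fin (m+3)), v ≠ 0 → (∃ i j, v i ≠ v j) →
      nsupp v ≤ k → ∀ t : ℝ, 0 < t → f t v = 0 by
    intro s hs x hx hxspan
    have hnc : ∃ i j, x i ≠ x j := by
      by_contra hc
      push_neg at hc
      apply hxspan
      rw [Submodule.mem_span_singleton]
      refine ⟨x 0, ?_⟩
      ext j
      have hones : (∑ i, EuclideanSpace.single i (1:ℝ) : EuclideanSpace ℝ (Fin (m+3))) j = 1 := by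
        rw [WithLp.ofLp_sum, Finset.sum_apply]
        simp [EuclideanSpace.single_apply]
      show x 0 * (∑ i, EuclideanSpace.single i (1:ℝ) : EuclideanSpace ℝ (Fin (m+3))) j = x j
      rw [hones, hc 0 j]
      ring
    exact Hk (nsupp x) x hx hnc le_rfl s hs
  intro k
  induction k with
  | zero =>
    intro v hv _ hle _ _
    exact absurd (le_trans (one_le_nsupp hv) hle) (by omega)
  | succ k IH =>
    intro v hv hnc hle t ht
    -- single-coordinate case
    by_cases hsing : nsupp v ≤ 1
    · have h1 : nsupp v = 1 := le_antisymm hsing (one_le_nsupp hv)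
      obtain ⟨j, hj⟩ := Finset.card_eq_one.1 h1
      have hvj : v j ≠ 0 := by
        have : j ∈ (Finset.univ.filter fun i => v i ≠ 0) := by rw [hj]; exact Finset.mem_singleton_self j
        exact mem_supp_iff.1 this
      have hrest : ∀ i, i ≠ j → v i = 0 := by
        intro i hi
        by_contra h
        have : i ∈ (Finset.univ.filter fun i => v i ≠ 0) := mem_supp_iff.2 h
        rw [hj, Finset.mem_singleton] at this
        exact hi this
      exact hsingle v j hvj hrest t ht
    push_neg at hsing
    rcases Nat.lt_or_ge (nsupp v) (k+1) with hlt | hge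
    · exact IH v hv hnc (by omega) t ht
    have hkv : nsupp v = k + 1 := le_antisymm hle hge
    have hkn : k + 1 ≤ m + 3 := hkv ▸ nsupp_le_card v
    -- IH freed from the non-constancy assumption
    have IH0 : ∀ u : EuclideanSpace ℝ (Fin (m+3)), u ≠ 0 → nsupp u ≤ k →
        ∀ t' : ℝ, 0 < t' → f t' u = 0 := by
      intro u hu hule
      have hlt : nsupp u < m + 3 := by omega
      obtain ⟨b0, hb0⟩ := exists_zero_coord hlt
      obtain ⟨i0, hi0⟩ := ne_of_coord.1 hu
      exact IH u hu ⟨i0, b0, by rw [hb0]; exact hi0⟩ hule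
    -- vanishing for mixed-sign vectors with support ≤ k+1
    have M : ∀ u : EuclideanSpace ℝ (Fin (m+3)), u ≠ 0 → nsupp u ≤ k + 1 →
        (∃ i j, u i * u j < 0) → ∀ t' : ℝ, 0 < t' → f t' u = 0 := by
      rintro u hu hule ⟨i, j, hij⟩ t' ht'
      have hui : u i ≠ 0 := by intro h; rw [h] at hij; simp at hij
      have huj : u j ≠ 0 := by intro h; rw [h] at hij; simp at hij
      have hne : i ≠ j := by rintro rfl; exact absurd hij (not_lt.2 (mul_self_nonneg (u i)))
      have hzero := zero_eq hfe hperm u hu i j hne hij t' ht'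
      have hl := lam_mem hij
      have hp1 : f (t' * (u i / (u i - u j)) ^ ((m + 3 : ℝ))⁻¹) (WithLp.toLp 2 (update u j 0)) = 0 := by
        refine IH0 _ ?_ ?_ _ ?_
        · exact toLp_ne_zero (Function.ne_iff.2 ⟨i, by rw [Function.update_of_ne hne]; exact hui⟩)
        · rw [nsupp_update_zero huj]; omega
        · have := hl.1; positivity
      have hp2 : f (t' * (1 - u i / (u i - u j)) ^ ((m + 3 : ℝ))⁻¹) (WithLp.toLp 2 (update u i 0)) = 0 := by
        refine IH0 _ ?_ ?_ _ ?_
        · exact toLp_ne_zero (Function.ne_iff.2 ⟨j, by rw [Function.update_of_ne (Ne.symm hne)]; exact huj⟩)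
        · rw [nsupp_update_zero hui]; omega
        · have h1 := hl.2; have : (0:ℝ) < 1 - u i / (u i - u j) := by linarith
          positivity
      rw [hp1, hp2] at hzero
      rw [hzero]; ring
    -- sign dichotomy
    by_cases hmix : ∃ i j, v i * v j < 0
    · exact M v hv (le_of_eq hkv) hmix t ht
    push_neg at hmix
    have hsame : ∀ a c : Fin (m+3), v a ≠ 0 → v c ≠ 0 → 0 < v a * v c := by
      intro a c ha hc
      exact lt_of_le_of_ne (hmix a c) (Ne.symm (mul_ne_zero ha hc))
    by_cases hzc : ∃ b, v b = 0
    · -- there is a vanishing coordinate : same-sign case with zero coordinate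
      obtain ⟨b, hb⟩ := hzc
      obtain ⟨a', ha'⟩ := ne_of_coord.1 hv
      have hab : a' ≠ b := by intro h; rw [h, hb] at ha'; exact ha' rfl
      obtain ⟨a₂, ha₂mem, ha₂a⟩ := Finset.exists_mem_ne (by
        show 1 < nsupp v; omega) a'
      have hva₂ : v a₂ ≠ 0 := mem_supp_iff.1 ha₂mem
      have ha₂b : a₂ ≠ b := by intro h; rw [h, hb] at hva₂; exact hva₂ rfl
      -- the fundamental relation
      have R : ∀ c d : Fin (m+3), c ≠ b → d ≠ b → c ≠ d → v c ≠ 0 → v d ≠ 0 →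
          ∀ ζ : ℝ, v c * ζ < 0 → ∀ s' : ℝ, 0 < s' →
          f s' (WithLp.toLp 2 (update v b ζ)) = (v c / (v c - ζ)) ^ (p / (m + 3 : ℝ)) *
            f (s' * (v c / (v c - ζ)) ^ ((m + 3 : ℝ))⁻¹) v := by
        intro c d hcb hdb hcd hvc hvd ζ hζ s' hs'
        have hζ0 : ζ ≠ 0 := by intro h; rw [h] at hζ; simp at hζ
        set z : EuclideanSpace ℝ (Fin (m+3)) := WithLp.toLp 2 (update v b ζ) with hzdef
        have hzb : z b = ζ := Function.update_self _ _ _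
        have hzc' : z c = v c := Function.update_of_ne hcb _ _
        have hzne : z ≠ 0 := ne_of_coord.2 ⟨c, by rw [hzc']; exact hvc⟩
        have hprod : z c * z b < 0 := by rw [hzb, hzc']; exact hζ
        have heq := zero_eq hfe hperm z hzne c b hcb hprod s' hs'
        rw [hzb, hzc'] at heq
        have hupd1 : WithLp.toLp 2 (update z b 0) = v := by
          rw [hzdef, WithLp.ofLp_toLp, Function.update_idem, ← hb, Function.update_eq_self, WithLp.toLp_ofLp]
        have hl := lam_mem hζ
        -- second piece vanishes
        have hy : f (s' * (1 - v c / (v c - ζ)) ^ ((m + 3 : ℝ))⁻¹) (WithLp.toLp 2 (update z c 0)) = 0 := by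
          refine M _ ?_ ?_ ?_ _ ?_
          · refine toLp_ne_zero (Function.ne_iff.2 ⟨b, ?_⟩)
            rw [Function.update_of_ne (Ne.symm hcb), hzb]; exact hζ0
          · have h1 : nsupp (WithLp.toLp 2 (update z c 0)) = nsupp z - 1 := nsupp_update_zero (by rw [hzc']; exact hvc)
            have h2 : nsupp z ≤ nsupp v + 1 := nsupp_update_le v b ζ
            omega
          · refine ⟨b, d, ?_⟩
            rw [WithLp.ofLp_toLp, Function.update_of_ne (Ne.symm hcb), Function.update_of_ne (Ne.symm hcd), hzb]
            rw [hzdef, WithLp.ofLp_toLp, Function.update_of_ne hdb]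
            have hsdζ := sign_transfer hζ (hsame c d hvc hvd)
            rw [mul_comm] at hsdζ
            exact hsdζ
          · have h1 := hl.2; have : (0:ℝ) < 1 - v c / (v c - ζ) := by linarith
            positivity
        rw [hupd1, hy] at heq
        rw [heq]; ring
      -- countability of the exceptional set
      have hE : {t' : ℝ | 0 < t' ∧ f t' v ≠ 0}.Countable := by
        have hEs : ∀ s' : ℝ, 0 < s' → {t' : ℝ | t' ∈ Set.Ioo 0 s' ∧ f t' v ≠ 0}.Countable := by
          intro s' hs'
          -- bad parameters ζ
          have hbadζ : {ζ : ℝ | v a' * ζ < 0 ∧ f s' (WithLp.toLp 2 (update v b ζ)) ≠ 0}.Countable := by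
            refine Set.MapsTo.countable_of_injOn
              (f := fun ζ => nmz (m' := m) (WithLp.toLp 2 (update v b ζ)))
              (t := {x ∈ Metric.sphere (0 : EuclideanSpace ℝ (Fin (m+3))) 1 | f s' x ≠ 0})
              ?_ ?_ (hcount s' hs')
            · rintro ζ ⟨hζ1, hζ2⟩
              have hzne : (WithLp.toLp 2 (update v b ζ) : EuclideanSpace ℝ (Fin (m+3))) ≠ 0 :=
                toLp_ne_zero (Function.ne_iff.2 ⟨a', by rw [Function.update_of_ne hab]; exact ha'⟩)
              obtain ⟨h1, h2⟩ := hnorm s' hs' _ hzne hζ2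
              beta_reduce
              exact Set.mem_sep h1 h2
            · rintro ζ ⟨hζ1, hζ2⟩ ζ' ⟨hζ1', hζ2'⟩ hgg
              have hzne : (WithLp.toLp 2 (update v b ζ) : EuclideanSpace ℝ (Fin (m+3))) ≠ 0 :=
                toLp_ne_zero (Function.ne_iff.2 ⟨a', by rw [Function.update_of_ne hab]; exact ha'⟩)
              have hzne' : (WithLp.toLp 2 (update v b ζ') : EuclideanSpace ℝ (Fin (m+3))) ≠ 0 :=
                toLp_ne_zero (Function.ne_iff.2 ⟨a', by rw [Function.update_of_ne hab]; exact ha'⟩)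
              have hgg' : nmz (m' := m) (WithLp.toLp 2 (update v b ζ)) = nmz (m' := m) (WithLp.toLp 2 (update v b ζ')) := hgg
              have hga := congrArg (fun w => w a') hgg'
              have hgb := congrArg (fun w => w b) hgg'
              simp only [nmz_apply, WithLp.ofLp_toLp, Function.update_of_ne hab]
                at hga
              simp only [nmz_apply, WithLp.ofLp_toLp, Function.update_self] at hgb
              have hnn := mul_right_cancel₀ ha' hga
              rw [hnn] at hgb
              refine mul_left_cancel₀ (inv_ne_zero ?_) hgb
              exact ne_of_gt (norm_pos_iff.2 hzne')
          -- transfer along the relation R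
          refine Set.MapsTo.countable_of_injOn
            (f := fun t' => v a' * (((t'/s') ^ ((m:ℝ)+3)) - 1) / ((t'/s') ^ ((m:ℝ)+3)))
            (t := {ζ : ℝ | v a' * ζ < 0 ∧ f s' (WithLp.toLp 2 (update v b ζ)) ≠ 0}) ?_ ?_ hbadζ
          · rintro t' ⟨ht'mem, ht'ne⟩
            obtain ⟨ht'0, ht's⟩ := ht'mem
            set lam : ℝ := (t'/s') ^ ((m:ℝ)+3) with hlam
            have hts : 0 < t' / s' := div_pos ht'0 hs'
            have hts1 : t' / s' < 1 := (div_lt_one hs').2 ht's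
            have hlam0 : 0 < lam := Real.rpow_pos_of_pos hts _
            have hlam1 : lam < 1 := Real.rpow_lt_one hts.le hts1 hNpos
            set ζ : ℝ := v a' * (lam - 1) / lam with hζdef
            have hζray : v a' * ζ < 0 := by
              have : v a' * ζ = (v a' * v a') * ((lam - 1)/lam) := by rw [hζdef]; ring
              rw [this]
              exact mul_neg_of_pos_of_neg (mul_self_pos.2 ha')
                (div_neg_of_neg_of_pos (by linarith) hlam0)
            refine ⟨hζray, ?_⟩
            have hLlam : v a' / (v a' - ζ) = lam := by
              rw [hζdef]
              exact lam_formula ha' (ne_of_gt hlam0)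
            have hreq := R a' a₂ hab ha₂b (Ne.symm ha₂a) ha' hva₂ ζ hζray s' hs'
            rw [hLlam] at hreq
            have hst : s' * lam ^ ((m + 3 : ℝ))⁻¹ = t' := by
              have h5 : lam ^ (((m:ℝ)+3))⁻¹ = t' / s' := rpowN_inv hts
              rw [h5, mul_comm, div_mul_cancel₀ _ (ne_of_gt hs')]
            rw [hst] at hreq
            rw [hreq]
            exact mul_ne_zero (by
              have := Real.rpow_pos_of_pos hlam0 (p / (m + 3:ℝ))
              exact ne_of_gt this) ht'ne
          · rintro t₁ ⟨⟨h10, h1s⟩, _⟩ t₂ ⟨⟨h20, h2s⟩, _⟩ heq12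
            have hl1 : 0 < (t₁/s') ^ ((m:ℝ)+3) := Real.rpow_pos_of_pos (div_pos h10 hs') _
            have hl2 : 0 < (t₂/s') ^ ((m:ℝ)+3) := Real.rpow_pos_of_pos (div_pos h20 hs') _
            have h : v a' * ((t₁/s') ^ ((m:ℝ)+3) - 1) / ((t₁/s') ^ ((m:ℝ)+3))
                = v a' * ((t₂/s') ^ ((m:ℝ)+3) - 1) / ((t₂/s') ^ ((m:ℝ)+3)) := heq12
            have hlameq := zeta_inj ha' (ne_of_gt hl1) (ne_of_gt hl2) h
            have h6 : t₁ / s' = t₂ / s' :=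
              rpow_right_inj (div_pos h10 hs') (div_pos h20 hs') hNpos hlameq
            have h7 : t₁ / s' * s' = t₂ / s' * s' := by rw [h6]
            rwa [div_mul_cancel₀ _ (ne_of_gt hs'), div_mul_cancel₀ _ (ne_of_gt hs')] at h7
        have hsub : {t' : ℝ | 0 < t' ∧ f t' v ≠ 0} ⊆
            ⋃ n : ℕ, {t' : ℝ | t' ∈ Set.Ioo 0 ((n:ℝ)+1) ∧ f t' v ≠ 0} := by
          rintro t' ⟨ht'0, ht'ne⟩
          obtain ⟨n, hn⟩ := exists_nat_gt t'
          exact Set.mem_iUnion.2 ⟨n, ⟨⟨ht'0, by linarith⟩, ht'ne⟩⟩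
        exact Set.Countable.mono hsub
          (Set.countable_iUnion fun n => hEs ((n:ℝ)+1) (by positivity))
      -- conclusion
      by_cases heq2 : ∃ a₁ b₁ : Fin (m+3), a₁ ≠ b₁ ∧ v a₁ = v b₁
      · -- (c1) two equal coordinates
        obtain ⟨a₁, b₁, hne1, hval1⟩ := heq2
        have hbad1 : {l : ℝ | l ∈ Set.Ioo (0:ℝ) 1 ∧
            t * l ^ ((m + 3 : ℝ))⁻¹ ∈ {t' : ℝ | 0 < t' ∧ f t' v ≠ 0}}.Countable := by
          refine Set.MapsTo.countable_of_injOn (f := fun l => t * l ^ ((m + 3 : ℝ))⁻¹)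
            (t := {t' : ℝ | 0 < t' ∧ f t' v ≠ 0}) ?_ ?_ hE
          · rintro l ⟨_, h2⟩; exact h2
          · rintro l₁ ⟨⟨h10, _⟩, _⟩ l₂ ⟨⟨h20, _⟩, _⟩ h
            have h1 : l₁ ^ ((m + 3 : ℝ))⁻¹ = l₂ ^ ((m + 3 : ℝ))⁻¹ :=
              mul_left_cancel₀ (ne_of_gt ht) h
            exact rpow_right_inj h10 h20 (inv_pos.2 hNpos) h1
        have hbad2 : {l : ℝ | l ∈ Set.Ioo (0:ℝ) 1 ∧
            t * (1 - l) ^ ((m + 3 : ℝ))⁻¹ ∈ {t' : ℝ | 0 < t' ∧ f t' v ≠ 0}}.Countable := by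
          refine Set.MapsTo.countable_of_injOn (f := fun l => t * (1 - l) ^ ((m + 3 : ℝ))⁻¹)
            (t := {t' : ℝ | 0 < t' ∧ f t' v ≠ 0}) ?_ ?_ hE
          · rintro l ⟨_, h2⟩; exact h2
          · rintro l₁ ⟨⟨_, h11⟩, _⟩ l₂ ⟨⟨_, h21⟩, _⟩ h
            have h1 : (1 - l₁) ^ ((m + 3 : ℝ))⁻¹ = (1 - l₂) ^ ((m + 3 : ℝ))⁻¹ :=
              mul_left_cancel₀ (ne_of_gt ht) h
            have := rpow_right_inj (by linarith) (by linarith) (inv_pos.2 hNpos) h1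
            linarith
        obtain ⟨l, hl, hnb1, hnb2⟩ := pick2 not_countable_Ioo01 hbad1 hbad2
        have hpair := pair_eq hfe hperm v hv a₁ b₁ hne1 t ht l hl
        have hvv : (1 - l) * v a₁ + l * v b₁ = v b₁ := by rw [← hval1]; ring
        have hvv2 : (1 - l) * v a₁ + l * v b₁ = v a₁ := by rw [hval1]; ring
        have hupd1 : WithLp.toLp 2 (update v b₁ ((1 - l) * v a₁ + l * v b₁)) = v := by
          rw [hvv, Function.update_eq_self, WithLp.toLp_ofLp]
        have hupd2 : WithLp.toLp 2 (update v a₁ ((1 - l) * v a₁ + l * v b₁)) = v := by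
          rw [hvv2, Function.update_eq_self, WithLp.toLp_ofLp]
        rw [hupd1, hupd2] at hpair
        have hz1 : f (t * l ^ ((m + 3 : ℝ))⁻¹) v = 0 := by
          by_contra h
          exact hnb1 ⟨hl, ⟨by have := hl.1; positivity, h⟩⟩
        have hz2 : f (t * (1 - l) ^ ((m + 3 : ℝ))⁻¹) v = 0 := by
          by_contra h
          refine hnb2 ⟨hl, ⟨?_, h⟩⟩
          have : (0:ℝ) < 1 - l := by have := hl.2; linarith
          positivity
        rw [hz1, hz2] at hpair
        rw [hpair]; ring
      · -- (c2) all coordinates pairwise distinct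
        push_neg at heq2
        have hva12 : v a' ≠ v a₂ := heq2 a' a₂ (Ne.symm ha₂a)
        have hprodaa : 0 < v a' * v a₂ := hsame a' a₂ ha' hva₂
        have hbad : {ζ : ℝ | v a' * ζ < 0 ∧
            t * ((v a₂ / (v a₂ - ζ)) / (v a' / (v a' - ζ))) ^ ((m + 3 : ℝ))⁻¹ ∈
              {t' : ℝ | 0 < t' ∧ f t' v ≠ 0}}.Countable := by
          refine Set.MapsTo.countable_of_injOn
            (f := fun ζ => t * ((v a₂ / (v a₂ - ζ)) / (v a' / (v a' - ζ))) ^ ((m + 3 : ℝ))⁻¹)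
            (t := {t' : ℝ | 0 < t' ∧ f t' v ≠ 0}) ?_ ?_ hE
          · rintro ζ ⟨_, h2⟩; exact h2
          · rintro ζ₁ ⟨hr1, _⟩ ζ₂ ⟨hr2, _⟩ h
            have hζ₁' : v a₂ * ζ₁ < 0 := sign_transfer hr1 hprodaa
            have hζ₂' : v a₂ * ζ₂ < 0 := sign_transfer hr2 hprodaa
            have hL1 := lam_mem hr1
            have hL2 := lam_mem hr2
            have hM1 := lam_mem hζ₁'
            have hM2 := lam_mem hζ₂'
            have hrr1 : 0 < (v a₂ / (v a₂ - ζ₁)) / (v a' / (v a' - ζ₁)) := div_pos hM1.1 hL1.1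
            have hrr2 : 0 < (v a₂ / (v a₂ - ζ₂)) / (v a' / (v a' - ζ₂)) := div_pos hM2.1 hL2.1
            have h1 := mul_left_cancel₀ (ne_of_gt ht) h
            have h2 := rpow_right_inj hrr1 hrr2 (inv_pos.2 hNpos) h1
            exact ratio_inj ha' hva₂ hva12 hr1 hr2 hζ₁' hζ₂' h2
        obtain ⟨ζ, hζray, hζbad, -⟩ := pick2 (not_countable_ray ha') hbad hbad
        have hζ₂ : v a₂ * ζ < 0 := sign_transfer hζray hprodaa
        have hLm := lam_mem hζray
        have hMm := lam_mem hζ₂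
        have hLpow : (0:ℝ) < (v a' / (v a' - ζ)) ^ ((m + 3 : ℝ))⁻¹ :=
          Real.rpow_pos_of_pos hLm.1 _
        set s₀ : ℝ := t * ((v a' / (v a' - ζ)) ^ ((m + 3 : ℝ))⁻¹)⁻¹ with hs₀def
        have hs₀ : 0 < s₀ := by positivity
        have hR1 := R a' a₂ hab ha₂b (Ne.symm ha₂a) ha' hva₂ ζ hζray s₀ hs₀
        have hR2 := R a₂ a' ha₂b hab ha₂a hva₂ ha' ζ hζ₂ s₀ hs₀
        have hst : s₀ * (v a' / (v a' - ζ)) ^ ((m + 3 : ℝ))⁻¹ = t := by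
          rw [hs₀def, mul_assoc, inv_mul_cancel₀ (ne_of_gt hLpow), mul_one]
        rw [hst] at hR1
        have hgt : s₀ * (v a₂ / (v a₂ - ζ)) ^ ((m + 3 : ℝ))⁻¹
            = t * ((v a₂ / (v a₂ - ζ)) / (v a' / (v a' - ζ))) ^ ((m + 3 : ℝ))⁻¹ := by
          rw [Real.div_rpow hMm.1.le hLm.1.le, hs₀def]
          ring
        rw [hgt] at hR2
        have hfz : f (t * ((v a₂ / (v a₂ - ζ)) / (v a' / (v a' - ζ))) ^ ((m + 3 : ℝ))⁻¹) v = 0 := by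
          by_contra h
          refine hζbad ⟨hζray, ⟨?_, h⟩⟩
          have hrr : 0 < (v a₂ / (v a₂ - ζ)) / (v a' / (v a' - ζ)) := div_pos hMm.1 hLm.1
          positivity
        rw [hfz, mul_zero] at hR2
        rw [hR2] at hR1
        have hA : (v a' / (v a' - ζ)) ^ (p / (m + 3 : ℝ)) ≠ 0 :=
          ne_of_gt (Real.rpow_pos_of_pos hLm.1 _)
        have := (mul_eq_zero.1 hR1.symm).resolve_left hA
        exact this
    · -- no vanishing coordinate : all coordinates nonzero
      push_neg at hzc
      have hall : nsupp v = m + 3 := nsupp_eq_card_of_all_ne hzc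
      have hk3 : k + 1 = m + 3 := by omega
      obtain ⟨a, -, hmax⟩ := Finset.exists_max_image Finset.univ (fun i => |v i|)
        ⟨0, Finset.mem_univ 0⟩
      obtain ⟨i, j, hij⟩ := hnc
      have hbex : ∃ b, v b ≠ v a := by
        rcases eq_or_ne (v i) (v a) with h | h
        · exact ⟨j, by rw [← h]; exact Ne.symm hij⟩
        · exact ⟨i, h⟩
      obtain ⟨b, hba⟩ := hbex
      have hab : a ≠ b := fun h => hba (by rw [h])
      have hprodab : 0 < v a * v b := hsame a b (hzc a) (hzc b)
      have haa : 0 < v a * v a := mul_self_pos.2 (hzc a)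
      have hlt2 : v a * v b < v a * v a := by
        rcases (hzc a).lt_or_gt with hneg | hpos
        · have hvb : v b < 0 := by
            rcases mul_pos_iff.1 hprodab with ⟨h1, _⟩ | ⟨_, h2⟩
            · linarith
            · exact h2
          have habs := hmax b (Finset.mem_univ b)
          rw [abs_of_neg hvb, abs_of_neg hneg] at habs
          have hba' : v a < v b := lt_of_le_of_ne (by linarith) (fun h => hba h.symm)
          exact mul_lt_mul_of_neg_left hba' hneg
        · have hvb : 0 < v b := by
            rcases mul_pos_iff.1 hprodab with ⟨_, h1⟩ | ⟨h2, _⟩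
            · exact h1
            · linarith
          have habs := hmax b (Finset.mem_univ b)
          rw [abs_of_pos hvb, abs_of_pos hpos] at habs
          have hba' : v b < v a := lt_of_le_of_ne habs hba
          exact mul_lt_mul_of_pos_left hba' hpos
      set l : ℝ := (v a * v a - v a * v b) / (2 * (v a * v a)) with hldef
      have hl : l ∈ Set.Ioo (0:ℝ) 1 := by
        constructor
        · exact div_pos (by linarith) (by linarith)
        · rw [div_lt_one (by linarith)]; linarith
      set z : EuclideanSpace ℝ (Fin (m+3)) := WithLp.toLp 2 (update v b (-(v a))) with hzdef
      have hzb : z b = -(v a) := Function.update_self _ _ _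
      have hza : z a = v a := Function.update_of_ne hab _ _
      have hzne : z ≠ 0 := ne_of_coord.2 ⟨a, by rw [hza]; exact hzc a⟩
      have hzall : ∀ i', z i' ≠ 0 := by
        intro i'
        rcases eq_or_ne i' b with rfl | h
        · rw [hzb]; exact neg_ne_zero.2 (hzc a)
        · rw [hzdef, WithLp.ofLp_toLp, Function.update_of_ne h]; exact hzc i'
      have hz0 : ∀ s', 0 < s' → f s' z = 0 := by
        intro s' hs'
        have hprod : z a * z b < 0 := by
          rw [hza, hzb, mul_neg]
          exact neg_lt_zero.2 haa
        have heqz := zero_eq hfe hperm z hzne a b hab hprod s' hs'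
        have hlz := lam_mem hprod
        have hf1 : f (s' * (z a / (z a - z b)) ^ ((m + 3 : ℝ))⁻¹) (WithLp.toLp 2 (update z b 0)) = 0 := by
          have hup : WithLp.toLp 2 (update z b 0) = WithLp.toLp 2 (update v b 0) := by
            rw [hzdef, WithLp.ofLp_toLp, Function.update_idem]
          rw [hup]
          refine IH0 _ ?_ ?_ _ ?_
          · exact toLp_ne_zero (Function.ne_iff.2 ⟨a, by rw [Function.update_of_ne hab]; exact hzc a⟩)
          · rw [nsupp_update_zero (hzc b)]; omega
          · have := hlz.1; positivity
        have hf2 : f (s' * (1 - z a / (z a - z b)) ^ ((m + 3 : ℝ))⁻¹) (WithLp.toLp 2 (update z a 0)) = 0 := by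
          refine IH0 _ ?_ ?_ _ ?_
          · refine toLp_ne_zero (Function.ne_iff.2 ⟨b, ?_⟩)
            rw [Function.update_of_ne (Ne.symm hab), hzb]
            exact neg_ne_zero.2 (hzc a)
          · rw [nsupp_update_zero (hzall a), nsupp_eq_card_of_all_ne hzall]; omega
          · have h1 := hlz.2
            have : (0:ℝ) < 1 - z a / (z a - z b) := by linarith
            positivity
        rw [hf1, hf2] at heqz
        rw [heqz]; ring
      have hpow : (0:ℝ) < l ^ ((m + 3 : ℝ))⁻¹ := Real.rpow_pos_of_pos hl.1 _
      set s₀ : ℝ := t * (l ^ ((m + 3 : ℝ))⁻¹)⁻¹ with hs₀def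
      have hs₀ : 0 < s₀ := by positivity
      have hpair := pair_eq hfe hperm z hzne a b hab s₀ hs₀ l hl
      have hval : (1 - l) * z a + l * z b = v b := by
        rw [hza, hzb, hldef]
        have hva0 := hzc a
        field_simp
        ring
      rw [hval] at hpair
      have hupdv : WithLp.toLp 2 (update z b (v b)) = v := by
        rw [hzdef, WithLp.ofLp_toLp, Function.update_idem, Function.update_eq_self, WithLp.toLp_ofLp]
      have hy : f (s₀ * (1 - l) ^ ((m + 3 : ℝ))⁻¹) (WithLp.toLp 2 (update z a (v b))) = 0 := by
        refine M _ ?_ ?_ ?_ _ ?_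
        · refine toLp_ne_zero (Function.ne_iff.2 ⟨b, ?_⟩)
          rw [Function.update_of_ne (Ne.symm hab), hzb]
          exact neg_ne_zero.2 (hzc a)
        · calc nsupp (update z a (v b)) ≤ m + 3 := nsupp_le_card _
            _ = k + 1 := hk3.symm
        · refine ⟨a, b, ?_⟩
          rw [WithLp.ofLp_toLp, Function.update_self, Function.update_of_ne (Ne.symm hab), hzb, mul_neg,
            neg_lt_zero, mul_comm]
          exact hprodab
        · have h1 := hl.2
          have : (0:ℝ) < 1 - l := by linarith
          positivity
      rw [hupdv, hy, hz0 s₀ hs₀] at hpair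
      have hst : s₀ * l ^ ((m + 3 : ℝ))⁻¹ = t := by
        rw [hs₀def, mul_assoc, inv_mul_cancel₀ (ne_of_gt hpow), mul_one]
      rw [hst] at hpair
      have hA : l ^ (p / (m + 3 : ℝ)) ≠ 0 := ne_of_gt (Real.rpow_pos_of_pos hl.1 _)
      have h0 : l ^ (p / (m + 3 : ℝ)) * f t v = 0 := by linarith [hpair]
      exact (mul_eq_zero.1 h0).resolve_left hA
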